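/- Let n ≥ 3 be an odd integer and let c be a real number with c > (n−1)^{n−1}/n^n. Then the real polynomial X^{n−1}(X−1) + c has exactly one real root, and this root is negative. -/

import Mathlib

lemma aux1 (m : ℕ) (hm : 1 ≤ m) (t : ℝ) (ht : 0 ≤ t) :
    ((m : ℝ) + 1) * t ^ m ≤ (m : ℝ) * t ^ (m + 1) + 1 := by
  induction m with
  | zero => omega
  | succ k ih =>
    rcases Nat.eq_or_lt_of_le hm with h | h
    · -- k = 0
      have hk : k = 0 := by omega
      subst hk
      simp only [pow_succ, pow_zero, one_mul]
      push_cast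
      nlinarith [sq_nonneg (t - 1)]
    · have hk : 1 ≤ k := by omega
      have IH := ih hk
      have h2 : 0 ≤ (t - 1) * (t ^ (k + 1) - 1) := by
        rcases le_total t 1 with h1 | h1
        · have : t ^ (k + 1) ≤ 1 := pow_le_one₀ ht h1
          nlinarith
        · have : 1 ≤ t ^ (k + 1) := one_le_pow₀ h1
          nlinarith
      have h3 := mul_le_mul_of_nonneg_left IH ht
      push_cast
      simp only [pow_succ] at *
      nlinarith [h3, h2]

lemma aux2 (m : ℕ) (hm : 1 ≤ m) (x : ℝ) (hx : 0 ≤ x) :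
    ((m : ℝ) + 1) ^ (m + 1) * (x ^ m * (1 - x)) ≤ (m : ℝ) ^ m := by
  have hm0 : (0 : ℝ) < m := by exact_mod_cast hm
  set t : ℝ := ((m : ℝ) + 1) * x / m with hts
  have ht : 0 ≤ t := by positivity
  have key := aux1 m hm t ht
  have h1 : t ^ m = ((m : ℝ) + 1) ^ m * x ^ m / (m : ℝ) ^ m := by
    rw [hts, div_pow, mul_pow]
  have h2 : t ^ (m + 1) = ((m : ℝ) + 1) ^ (m + 1) * x ^ (m + 1) / (m : ℝ) ^ (m + 1) := by
    rw [hts, div_pow, mul_pow]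
  rw [h1, h2] at key
  have hmne : (m : ℝ) ^ m ≠ 0 := by positivity
  have hmne' : (m : ℝ) ^ (m + 1) ≠ 0 := by positivity
  field_simp at key
  refine le_of_mul_le_mul_right ?_ (show (0:ℝ) < (m:ℝ)^(m+1) by positivity)
  simp only [pow_succ] at key ⊢
  nlinarith [key]

/-- Let `n ≥ 3` be odd and `c : ℝ` with `c > (n−1)^(n−1) / n^n`. Then the
real polynomial `X^(n−1) (X−1) + c` has exactly one real root, and this root is negative. -/
theorem stmt15 (n : ℕ) (hn : 3 ≤ n) (hodd : Odd n) (c : ℝ)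
    (hc : ((n : ℝ) - 1) ^ (n - 1) / (n : ℝ) ^ n < c) :
    (∃! x : ℝ, x ^ (n - 1) * (x - 1) + c = 0) ∧
      ∀ x : ℝ, x ^ (n - 1) * (x - 1) + c = 0 → x < 0 := by
  obtain ⟨m, hnm⟩ : ∃ m, n = m + 1 := ⟨n - 1, by omega⟩
  subst hnm
  have hm : 1 ≤ m := by omega
  have hm0 : m ≠ 0 := by omega
  have hmeven : Even m := by
    rcases hodd with ⟨k, hk⟩
    exact ⟨k, by omega⟩
  simp only [Nat.add_sub_cancel] at *
  have hcast : ((m : ℝ) + 1) - 1 = (m : ℝ) := by ring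
  have hcast2 : ((m + 1 : ℕ) : ℝ) = (m : ℝ) + 1 := by push_cast; ring
  rw [hcast2, hcast] at hc
  have hm0' : (0 : ℝ) < m := by exact_mod_cast hm
  have hbound : (0 : ℝ) < (m : ℝ) ^ m / ((m : ℝ) + 1) ^ (m + 1) := by positivity
  have hcpos : 0 < c := lt_trans hbound hc
  -- positivity for x ≥ 0
  have hpos : ∀ x : ℝ, 0 ≤ x → 0 < x ^ m * (x - 1) + c := by
    intro x hx
    have h2 := aux2 m hm x hx
    have h3 : x ^ m * (1 - x) ≤ (m : ℝ) ^ m / ((m : ℝ) + 1) ^ (m + 1) := by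
      rw [le_div_iff₀ (by positivity)]
      linarith [h2]
    nlinarith [h3, hc]
  -- strict monotonicity on nonpositive reals
  have hmono : ∀ x y : ℝ, x < y → y ≤ 0 →
      x ^ m * (x - 1) + c < y ^ m * (y - 1) + c := by
    intro x y hxy hy
    have hxneg : x < 0 := lt_of_lt_of_le hxy hy
    have habs : |y| < |x| := by
      rw [abs_of_neg hxneg, abs_of_nonpos hy]; linarith
    have hpowlt : y ^ m < x ^ m := by
      rw [← hmeven.pow_abs y, ← hmeven.pow_abs x]
      exact pow_lt_pow_left₀ habs (abs_nonneg y) hm0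
    have hynn : 0 ≤ y ^ m := hmeven.pow_nonneg y
    nlinarith [hpowlt, hynn]
  -- existence via IVT
  have hcont : Continuous fun x : ℝ => x ^ m * (x - 1) + c := by continuity
  set x₀ : ℝ := -(c + 1) with hx₀
  have hx₀le : x₀ ≤ -1 := by simp [hx₀]; linarith
  have hx₀neg : x₀ ≤ 0 := by linarith
  have hfx₀ : x₀ ^ m * (x₀ - 1) + c ≤ 0 := by
    have h1 : (1 : ℝ) ≤ x₀ ^ m := by
      rw [← hmeven.pow_abs x₀]
      apply one_le_pow₀
      rw [abs_of_nonpos hx₀neg]; linarith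
    have h2 : x₀ - 1 ≤ -(c + 2) := by rw [hx₀]; ring_nf; linarith
    nlinarith [h1, h2, hcpos]
  have hf0 : (0:ℝ) ^ m * ((0:ℝ) - 1) + c = c := by
    rw [zero_pow hm0]; ring
  obtain ⟨r, hrmem, hr⟩ : ∃ r ∈ Set.Icc x₀ (0:ℝ), r ^ m * (r - 1) + c = 0 := by
    have := intermediate_value_Icc hx₀neg (hcont.continuousOn (s := Set.Icc x₀ 0))
    have h0mem : (0:ℝ) ∈ Set.Icc (x₀ ^ m * (x₀ - 1) + c) ((0:ℝ) ^ m * ((0:ℝ) - 1) + c) := by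
      rw [hf0]; exact ⟨hfx₀, hcpos.le⟩
    obtain ⟨r, hr1, hr2⟩ := this h0mem
    exact ⟨r, hr1, hr2⟩
  have hrneg : r < 0 := by
    rcases lt_or_eq_of_le hrmem.2 with h | h
    · exact h
    · exfalso; rw [h, hf0] at hr; linarith
  -- all roots are negative
  have hallneg : ∀ x : ℝ, x ^ m * (x - 1) + c = 0 → x < 0 := by
    intro x hx
    by_contra h
    push_neg at h
    have := hpos x h
    linarith
  refine ⟨⟨r, hr, ?_⟩, hallneg⟩
  intro y hy
  have hyneg := hallneg y hy
  rcases lt_trichotomy y r with h | h | h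
  · have := hmono y r h hrneg.le
    rw [hy, hr] at this; linarith
  · exact h
  · have := hmono r y h hyneg.le
    rw [hy, hr] at this; linarith
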